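/- arXiv:2012.11752 — 2 statements merged into one kernel-verified Lean document; each statement's English description precedes it below -/
import Mathlib

section
/- Let m = 3, r ∈ ℕ, and λ ∈ ℂ. If f is a vertex function on C_3^N supported in Σ_r satisfying A_0 f = λ • f, then A_+ f is supported in Σ_{r+1} and A_0 (A_+ f) = (λ + 1) • (A_+ f); that is, the outer adjacency maps λ-eigenvectors of A_0 supported in Σ_r to (λ+1)-eigenvectors of A_0 supported in Σ_{r+1}. -/
open Finset

/-- The standard generator `e_k` of `(ZMod m)^N`: equal to `1` in coordinate `k`,
`0` elsewhere. -/
def eV (N m : ℕ) (k : Fin N) : Fin N → ZMod m :=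
  fun j => if j = k then 1 else 0

/-- Adjacency in the Cayley graph `C_m^N`: `v ∼ w` iff `w = v + e_k` or `w = v - e_k`
for some coordinate `k`. -/
def adj (N m : ℕ) (v w : Fin N → ZMod m) : Prop :=
  ∃ k : Fin N, w = v + eV N m k ∨ w = v - eV N m k

/-- The `k`-th level of a vertex: `d_k(v) = min((v k).val, m - (v k).val)`. -/
def lev (N m : ℕ) (v : Fin N → ZMod m) (k : Fin N) : ℕ :=
  min ((v k).val) (m - (v k).val)

/-- Path distance of a vertex to the origin: `d(v) = Σ_k d_k(v)`. -/
def distO (N m : ℕ) (v : Fin N → ZMod m) : ℕ :=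
  ∑ k : Fin N, lev N m v k

open Classical in
/-- Adjacency operator: `(A f)(v) = Σ_{w ∼ v} f(w)`. -/
noncomputable def Aop (N m : ℕ) [NeZero m] (f : (Fin N → ZMod m) → ℂ) :
    (Fin N → ZMod m) → ℂ :=
  fun v => ∑ w : Fin N → ZMod m, if adj N m v w then f w else 0

open Classical in
/-- Outer adjacency: `(A₊ f)(v) = Σ_{w ∼ v, d(w) < d(v)} f(w)`. -/
noncomputable def Aplus (N m : ℕ) [NeZero m] (f : (Fin N → ZMod m) → ℂ) :
    (Fin N → ZMod m) → ℂ :=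
  fun v => ∑ w : Fin N → ZMod m,
    if adj N m v w ∧ distO N m w < distO N m v then f w else 0

open Classical in
/-- Inner adjacency: `(A₋ f)(v) = Σ_{w ∼ v, d(w) > d(v)} f(w)`. -/
noncomputable def Aminus (N m : ℕ) [NeZero m] (f : (Fin N → ZMod m) → ℂ) :
    (Fin N → ZMod m) → ℂ :=
  fun v => ∑ w : Fin N → ZMod m,
    if adj N m v w ∧ distO N m v < distO N m w then f w else 0

open Classical in
/-- Neutral adjacency: `(A₀ f)(v) = Σ_{w ∼ v, d(w) = d(v)} f(w)`. -/
noncomputable def Azero (N m : ℕ) [NeZero m] (f : (Fin N → ZMod m) → ℂ) :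
    (Fin N → ZMod m) → ℂ :=
  fun v => ∑ w : Fin N → ZMod m,
    if adj N m v w ∧ distO N m w = distO N m v then f w else 0

/-- The `k`-reflection `ṽ_k` of a vertex: negate the `k`-th coordinate. -/
def reflV (N m : ℕ) (k : Fin N) (v : Fin N → ZMod m) : Fin N → ZMod m :=
  Function.update v k (-(v k))

/-- Level-one reflection sum: `(R₁ f)(v) = Σ_{k : d_k(v) = 1} f(ṽ_k)`. -/
noncomputable def R1 (N m : ℕ) (f : (Fin N → ZMod m) → ℂ) :
    (Fin N → ZMod m) → ℂ :=
  fun v => ∑ k ∈ Finset.univ.filter (fun k => lev N m v k = 1), f (reflV N m k v)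

/-- Number of coordinates of `v` at level `ℓ`. -/
def cardLev (N m : ℕ) (v : Fin N → ZMod m) (ℓ : ℕ) : ℕ :=
  (Finset.univ.filter (fun k => lev N m v k = ℓ)).card

section Helpers
variable {N : ℕ}

lemma add_eV (v : Fin N → ZMod 3) (k : Fin N) :
    v + eV N 3 k = Function.update v k (v k + 1) := by
  funext j; by_cases h : j = k <;> simp [eV, Function.update_apply, h]

lemma sub_eV (v : Fin N → ZMod 3) (k : Fin N) :
    v - eV N 3 k = Function.update v k (v k - 1) := by
  funext j; by_cases h : j = k <;> simp [eV, Function.update_apply, h]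

lemma zmod3_cases (a : ZMod 3) : a = 0 ∨ a = 1 ∨ a = 2 := by revert a; decide

lemma lev_eq (v : Fin N → ZMod 3) (k : Fin N) :
    lev N 3 v k = if v k = 0 then 0 else 1 := by
  have h : ∀ a : ZMod 3, min a.val (3 - a.val) = if a = 0 then 0 else 1 := by decide
  exact h (v k)

lemma distO_erase (v : Fin N → ZMod 3) (k : Fin N) :
    distO N 3 v = (∑ j ∈ Finset.univ.erase k, lev N 3 v j) + lev N 3 v k := by
  rw [distO, ← Finset.sum_erase_add _ _ (Finset.mem_univ k)]

lemma distO_update (v : Fin N → ZMod 3) (k : Fin N) (c : ZMod 3) :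
    distO N 3 (Function.update v k c)
      = (∑ j ∈ Finset.univ.erase k, lev N 3 v j) + (if c = 0 then 0 else 1) := by
  rw [distO_erase _ k]
  congr 1
  · apply Finset.sum_congr rfl
    intro j hj
    have hjk : j ≠ k := (Finset.mem_erase.mp hj).1
    simp [lev, Function.update_apply, hjk]
  · rw [lev_eq]; simp

end Helpers

section Helpers2
variable {N : ℕ}

lemma key1 : ∀ a : ZMod 3, a + 1 ≠ a := by decide
lemma key2 : ∀ a : ZMod 3, a - 1 ≠ a := by decide
lemma key3 : ∀ a : ZMod 3, a + 1 ≠ a - 1 := by decide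

lemma phi_inj (v : Fin N → ZMod 3) : Function.Injective (fun p : Fin N × Bool =>
    if p.2 then v + eV N 3 p.1 else v - eV N 3 p.1) := by
  rintro ⟨k, b⟩ ⟨k', b'⟩ h
  simp only at h
  by_cases hk : k = k'
  · subst hk
    rcases b <;> rcases b' <;> simp only [if_true, if_false, Bool.false_eq_true,
      Bool.true_eq_false, reduceIte] at h ⊢
    · have h1 := congrFun h k
      rw [add_eV, sub_eV] at h1
      simp only [Function.update_self] at h1
      exact absurd h1.symm (key3 (v k))
    · have h1 := congrFun h k
      rw [add_eV, sub_eV] at h1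
      simp only [Function.update_self] at h1
      exact absurd h1 (key3 (v k))
  · exfalso
    have h1 := congrFun h k
    rcases b <;> rcases b' <;>
      simp only [if_true, if_false, Bool.false_eq_true, Bool.true_eq_false,
        reduceIte, add_eV, sub_eV, Function.update_self,
        Function.update_of_ne hk] at h1
    · exact key2 (v k) h1
    · exact key2 (v k) h1
    · exact key1 (v k) h1
    · exact key1 (v k) h1

end Helpers2

section Helpers3
variable {N : ℕ}

open Classical in
lemma sum_adj (v : Fin N → ZMod 3) (P : (Fin N → ZMod 3) → Prop) [DecidablePred P] (f : (Fin N → ZMod 3) → ℂ) :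
    (∑ w : Fin N → ZMod 3, if adj N 3 v w ∧ P w then f w else 0)
    = ∑ k : Fin N,
        ((if P (Function.update v k (v k + 1)) then f (Function.update v k (v k + 1)) else 0)
        + (if P (Function.update v k (v k - 1)) then f (Function.update v k (v k - 1)) else 0)) := by
  classical
  have himg : Finset.univ.filter (fun w => adj N 3 v w) =
      Finset.image (fun p : Fin N × Bool => if p.2 then v + eV N 3 p.1 else v - eV N 3 p.1)
        Finset.univ := by
    ext w
    simp only [Finset.mem_filter, Finset.mem_univ, true_and, Finset.mem_image]
    constructor
    · rintro ⟨k, hk | hk⟩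
      · exact ⟨(k, true), by simpa using hk.symm⟩
      · exact ⟨(k, false), by simpa using hk.symm⟩
    · rintro ⟨⟨k, b⟩, hk⟩
      rcases b
      · exact ⟨k, Or.inr (by simpa using hk.symm)⟩
      · exact ⟨k, Or.inl (by simpa using hk.symm)⟩
  calc (∑ w : Fin N → ZMod 3, if adj N 3 v w ∧ P w then f w else 0)
      = ∑ w ∈ Finset.univ.filter (fun w => adj N 3 v w), (if P w then f w else 0) := by
        rw [Finset.sum_filter]
        apply Finset.sum_congr rfl
        intro w _
        by_cases h1 : adj N 3 v w <;> by_cases h2 : P w <;> simp [h1, h2]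
    _ = ∑ p : Fin N × Bool,
          (if P (if p.2 then v + eV N 3 p.1 else v - eV N 3 p.1)
           then f (if p.2 then v + eV N 3 p.1 else v - eV N 3 p.1) else 0) := by
        rw [himg, Finset.sum_image (fun x _ y _ h => phi_inj v h)]
    _ = _ := by
        rw [Fintype.sum_prod_type]
        apply Finset.sum_congr rfl
        intro k _
        rw [Fintype.sum_bool]
        simp only [if_true, if_false, Bool.false_eq_true, Bool.true_eq_false, reduceIte,
          add_eV, sub_eV]

end Helpers3

section Helpers4
variable {N : ℕ}

lemma hstep_eq (v : Fin N → ZMod 3) (k : Fin N) (c : ZMod 3) :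
    (distO N 3 (Function.update v k c) = distO N 3 v) ↔
      ((if c = 0 then (0:ℕ) else 1) = if v k = 0 then 0 else 1) := by
  rw [distO_update, distO_erase v k, lev_eq]
  omega

lemma hstep_lt (v : Fin N → ZMod 3) (k : Fin N) (c : ZMod 3) :
    (distO N 3 (Function.update v k c) < distO N 3 v) ↔
      ((if c = 0 then (0:ℕ) else 1) < if v k = 0 then 0 else 1) := by
  rw [distO_update, distO_erase v k, lev_eq]
  omega

open Classical in
lemma Azero_eq (f : (Fin N → ZMod 3) → ℂ) (v : Fin N → ZMod 3) :
    Azero N 3 f v = ∑ k : Fin N, if v k ≠ 0 then f (reflV N 3 k v) else 0 := by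
  simp only [Azero]
  rw [sum_adj v (fun w => distO N 3 w = distO N 3 v) f]
  apply Finset.sum_congr rfl
  intro k _
  rcases zmod3_cases (v k) with h | h | h
  · have c1 : ¬ (distO N 3 (Function.update v k (v k + 1)) = distO N 3 v) := by
      rw [hstep_eq]; simp [h]
    have c2 : ¬ (distO N 3 (Function.update v k (v k - 1)) = distO N 3 v) := by
      rw [hstep_eq]; simp [h, show (0:ZMod 3) - 1 ≠ 0 by decide]
    rw [if_neg c1, if_neg c2, if_neg (by simp [h])]
    simp
  · have c1 : distO N 3 (Function.update v k (v k + 1)) = distO N 3 v := by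
      rw [hstep_eq]; simp [h, show (1:ZMod 3) + 1 ≠ 0 by decide,
        show (1:ZMod 3) ≠ 0 by decide]
    have c2 : ¬ (distO N 3 (Function.update v k (v k - 1)) = distO N 3 v) := by
      rw [hstep_eq]; simp [h, show (1:ZMod 3) - 1 = 0 by decide,
        show (1:ZMod 3) ≠ 0 by decide]
    have e1 : Function.update v k (v k + 1) = reflV N 3 k v := by
      rw [reflV, h, show (1:ZMod 3) + 1 = -1 by decide]
    rw [if_pos c1, if_neg c2, e1, if_pos (by simp [h, show (1:ZMod 3) ≠ 0 by decide])]
    simp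
  · have c1 : ¬ (distO N 3 (Function.update v k (v k + 1)) = distO N 3 v) := by
      rw [hstep_eq]; simp [h, show (2:ZMod 3) + 1 = 0 by decide,
        show (2:ZMod 3) ≠ 0 by decide]
    have c2 : distO N 3 (Function.update v k (v k - 1)) = distO N 3 v := by
      rw [hstep_eq]; simp [h, show (2:ZMod 3) - 1 ≠ 0 by decide,
        show (2:ZMod 3) ≠ 0 by decide]
    have e2 : Function.update v k (v k - 1) = reflV N 3 k v := by
      rw [reflV, h, show (2:ZMod 3) - 1 = -2 by decide]
    rw [if_neg c1, if_pos c2, e2, if_pos (by simp [h, show (2:ZMod 3) ≠ 0 by decide])]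
    simp

open Classical in
lemma Aplus_eq (f : (Fin N → ZMod 3) → ℂ) (v : Fin N → ZMod 3) :
    Aplus N 3 f v = ∑ k : Fin N, if v k ≠ 0 then f (Function.update v k 0) else 0 := by
  simp only [Aplus]
  rw [sum_adj v (fun w => distO N 3 w < distO N 3 v) f]
  apply Finset.sum_congr rfl
  intro k _
  rcases zmod3_cases (v k) with h | h | h
  · have c1 : ¬ (distO N 3 (Function.update v k (v k + 1)) < distO N 3 v) := by
      rw [hstep_lt]; simp [h]
    have c2 : ¬ (distO N 3 (Function.update v k (v k - 1)) < distO N 3 v) := by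
      rw [hstep_lt]; simp [h]
    rw [if_neg c1, if_neg c2, if_neg (by simp [h])]
    simp
  · have c1 : ¬ (distO N 3 (Function.update v k (v k + 1)) < distO N 3 v) := by
      rw [hstep_lt]; simp [h, show (1:ZMod 3) + 1 ≠ 0 by decide]
    have c2 : distO N 3 (Function.update v k (v k - 1)) < distO N 3 v := by
      rw [hstep_lt]; simp [h, show (1:ZMod 3) - 1 = 0 by decide,
        show (1:ZMod 3) ≠ 0 by decide]
    have e2 : Function.update v k (v k - 1) = Function.update v k 0 := by
      rw [h, show (1:ZMod 3) - 1 = 0 by decide]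
    rw [if_neg c1, if_pos c2, e2, if_pos (by simp [h, show (1:ZMod 3) ≠ 0 by decide])]
    simp
  · have c1 : distO N 3 (Function.update v k (v k + 1)) < distO N 3 v := by
      rw [hstep_lt]; simp [h, show (2:ZMod 3) + 1 = 0 by decide,
        show (2:ZMod 3) ≠ 0 by decide]
    have c2 : ¬ (distO N 3 (Function.update v k (v k - 1)) < distO N 3 v) := by
      rw [hstep_lt]; simp [h, show (2:ZMod 3) - 1 ≠ 0 by decide, show (2:ZMod 3) ≠ 0 by decide]
    have e1 : Function.update v k (v k + 1) = Function.update v k 0 := by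
      rw [h, show (2:ZMod 3) + 1 = 0 by decide]
    rw [if_pos c1, if_neg c2, e1, if_pos (by simp [h, show (2:ZMod 3) ≠ 0 by decide])]
    simp

end Helpers4

section Helpers5
variable {N : ℕ}

lemma refl_apply_self (v : Fin N → ZMod 3) (k : Fin N) : reflV N 3 k v k = -(v k) := by
  simp [reflV]

lemma refl_apply_ne (v : Fin N → ZMod 3) {j k : Fin N} (hj : j ≠ k) :
    reflV N 3 k v j = v j := by
  simp [reflV, Function.update_of_ne hj]

lemma upd_refl_self (v : Fin N → ZMod 3) (k : Fin N) :
    Function.update (reflV N 3 k v) k 0 = Function.update v k 0 := by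
  simp [reflV, Function.update_idem]

lemma upd_refl_ne (v : Fin N → ZMod 3) {j k : Fin N} (hj : j ≠ k) :
    Function.update (reflV N 3 k v) j 0 = reflV N 3 k (Function.update v j 0) := by
  unfold reflV
  rw [Function.update_of_ne (Ne.symm hj), Function.update_comm (Ne.symm hj)]

end Helpers5


/-- on `C_3^N`, `A₊` maps `λ`-eigenvectors of `A₀` supported in `Σ_r`
to `(λ+1)`-eigenvectors of `A₀` supported in `Σ_{r+1}`. -/
theorem outer_raises_neutral_eigenvalue_C3 (N r : ℕ) (hN : 1 ≤ N) (lam : ℂ)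
    (f : (Fin N → ZMod 3) → ℂ)
    (hf : ∀ v, distO N 3 v ≠ r → f v = 0)
    (heig : ∀ v, Azero N 3 f v = lam * f v) :
    (∀ v, distO N 3 v ≠ r + 1 → Aplus N 3 f v = 0) ∧
    (∀ v, Azero N 3 (Aplus N 3 f) v = (lam + 1) * Aplus N 3 f v) := by
  constructor
  · intro v hv
    rw [Aplus_eq]
    apply Finset.sum_eq_zero
    intro k _
    by_cases hk : v k = 0
    · simp [hk]
    · rw [if_pos hk]
      apply hf
      intro hr
      apply hv
      rw [distO_erase v k, lev_eq, if_neg hk]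
      rw [distO_update] at hr
      norm_num at hr
      omega
  · intro v
    classical
    set u : Fin N → (Fin N → ZMod 3) := fun j => Function.update v j 0 with hu
    have hAp : ∀ k : Fin N, v k ≠ 0 → Aplus N 3 f (reflV N 3 k v) =
        ∑ j : Fin N, if v j ≠ 0 then
          (if j = k then f (u k) else f (reflV N 3 k (u j))) else 0 := by
      intro k hk
      rw [Aplus_eq]
      apply Finset.sum_congr rfl
      intro j _
      by_cases hj : j = k
      · subst hj
        rw [refl_apply_self, upd_refl_self]
        by_cases hvj : v j = 0
        · simp [hvj]
        · simp [hvj, neg_eq_zero, hu]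
      · rw [refl_apply_ne v hj, upd_refl_ne v hj]
        by_cases hvj : v j = 0
        · simp [hvj]
        · simp [hvj, hj, hu]
    rw [Azero_eq]
    calc (∑ k : Fin N, if v k ≠ 0 then Aplus N 3 f (reflV N 3 k v) else 0)
        = ∑ k : Fin N, ∑ j : Fin N,
            ((if j = k ∧ v k ≠ 0 then f (u k) else 0)
            + (if j ≠ k ∧ v k ≠ 0 ∧ v j ≠ 0 then f (reflV N 3 k (u j)) else 0)) := by
          apply Finset.sum_congr rfl
          intro k _
          by_cases hk : v k = 0
          · rw [if_neg (by simp [hk])]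
            symm
            apply Finset.sum_eq_zero
            intro j _
            simp [hk]
          · rw [if_pos hk, hAp k hk]
            apply Finset.sum_congr rfl
            intro j _
            by_cases hj : j = k <;> by_cases hvj : v j = 0 <;>
              simp [hj, hvj, hk]
      _ = (∑ k : Fin N, if v k ≠ 0 then f (u k) else 0)
          + ∑ j : Fin N, ∑ k : Fin N,
              (if k ≠ j ∧ v k ≠ 0 ∧ v j ≠ 0 then f (reflV N 3 k (u j)) else 0) := by
          simp only [Finset.sum_add_distrib]
          congr 1
          · apply Finset.sum_congr rfl
            intro k _
            have h1 : ∀ j : Fin N, (if j = k ∧ v k ≠ 0 then f (u k) else 0)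
                = if j = k then (if v k ≠ 0 then f (u k) else 0) else 0 := by
              intro j
              by_cases h2 : j = k <;> by_cases h3 : v k = 0 <;> simp [h2, h3]
            simp only [h1]
            rw [Finset.sum_ite_eq' Finset.univ k (fun _ => if v k ≠ 0 then f (u k) else 0)]
            simp
          · rw [Finset.sum_comm]
            apply Finset.sum_congr rfl
            intro j _
            apply Finset.sum_congr rfl
            intro k _
            apply if_congr _ rfl rfl
            constructor
            · rintro ⟨h1, h2, h3⟩; exact ⟨Ne.symm h1, h2, h3⟩
            · rintro ⟨h1, h2, h3⟩; exact ⟨Ne.symm h1, h2, h3⟩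
      _ = (lam + 1) * Aplus N 3 f v := by
          have hO : (∑ j : Fin N, ∑ k : Fin N,
              (if k ≠ j ∧ v k ≠ 0 ∧ v j ≠ 0 then f (reflV N 3 k (u j)) else 0))
              = lam * ∑ j : Fin N, (if v j ≠ 0 then f (u j) else 0) := by
            rw [Finset.mul_sum]
            apply Finset.sum_congr rfl
            intro j _
            by_cases hj : v j = 0
            · rw [if_neg (by simp [hj]), mul_zero]
              apply Finset.sum_eq_zero
              intro k _
              rw [if_neg]
              rintro ⟨-, -, h3⟩
              exact h3 hj
            · rw [if_pos hj, ← heig (u j), Azero_eq]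
              apply Finset.sum_congr rfl
              intro k _
              by_cases hkj : k = j
              · subst hkj
                rw [if_neg (by simp), if_neg (by simp [hu])]
              · have huk : u j k = v k := by simp [hu, Function.update_of_ne hkj]
                by_cases hvk : v k = 0
                · rw [if_neg (by simp [hvk]), if_neg (by simp [huk, hvk])]
                · rw [if_pos ⟨hkj, hvk, hj⟩, if_pos (by simp [huk, hvk])]
          rw [hO, Aplus_eq]
          have : (∑ k : Fin N, if v k ≠ 0 then f (Function.update v k 0) else 0)
              = ∑ k : Fin N, (if v k ≠ 0 then f (u k) else 0) := by
            apply Finset.sum_congr rfl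
            intro k _
            simp [hu]
          rw [this]
          ring
end

section
/- Let m = 4 and p, q ∈ ℕ, and set r = p + 2q. Define m(r,k) ∈ ℤ recursively by m(r,0) = 2(N − r) and m(r,k) = m(r,k−1) + 2(N − (r + k)) for k ≥ 1. If f is a vertex function on C_4^N supported in Σ_{p,q} with A_- f = 0, then for every k ∈ ℕ, A_-(A_+^{k+1} f) = m(r,k) • (A_+^k f). -/
open Finset

/-- The multiplier `m(r,k)`: `m(r,0) = 2(N - r)` and
`m(r,k) = m(r,k-1) + 2(N - (r + k))`. -/
def mc4 (N r : ℕ) : ℕ → ℤ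
  | 0 => 2 * ((N : ℤ) - (r : ℤ))
  | k + 1 => mc4 N r k + 2 * ((N : ℤ) - ((r : ℤ) + ((k : ℤ) + 1)))

section Aux

-- aux
def lev4 (x : ZMod 4) : ℕ := min x.val (4 - x.val)

def sgn (b : Bool) : ZMod 4 := if b then 1 else -1

def mov (N : ℕ) (s : Fin N × Bool) : Fin N → ZMod 4 :=
  fun j => if j = s.1 then sgn s.2 else 0

lemma lev_eq_lev4 (N : ℕ) (v : Fin N → ZMod 4) (k : Fin N) : lev N 4 v k = lev4 (v k) := rfl

lemma add_mov_apply (N : ℕ) (v : Fin N → ZMod 4) (s : Fin N × Bool) (j : Fin N) :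
    (v + mov N s) j = if j = s.1 then v s.1 + sgn s.2 else v j := by
  simp only [Pi.add_apply, mov]
  split <;> simp_all

lemma adj_iff (N : ℕ) (v w : Fin N → ZMod 4) :
    adj N 4 v w ↔ ∃ s : Fin N × Bool, w = v + mov N s := by
  constructor
  · rintro ⟨k, h | h⟩
    · exact ⟨(k, true), by funext j; simp [h, eV, mov, sgn]⟩
    · refine ⟨(k, false), ?_⟩
      funext j
      simp only [h, Pi.sub_apply, Pi.add_apply, eV, mov, sgn]
      split <;> simp <;> ring
  · rintro ⟨⟨k, b⟩, h⟩
    cases b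
    · refine ⟨k, Or.inr ?_⟩
      funext j
      simp only [h, Pi.sub_apply, Pi.add_apply, eV, mov, sgn]
      split <;> simp <;> ring
    · exact ⟨k, Or.inl (by funext j; simp [h, eV, mov, sgn])⟩

lemma mov_injective (N : ℕ) (v : Fin N → ZMod 4) :
    Function.Injective (fun s : Fin N × Bool => v + mov N s) := by
  rintro ⟨k, b⟩ ⟨l, c⟩ h
  simp only at h
  have h2 : ∀ j, mov N (k, b) j = mov N (l, c) j := fun j => by
    have := congrFun h j; simpa using this
  have hk := h2 k
  by_cases hkl : k = l
  · subst hkl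
    simp only [mov, if_pos rfl] at hk
    cases b <;> cases c <;> simp_all [sgn] <;> revert hk <;> decide
  · exfalso
    simp only [mov, if_pos rfl, if_neg hkl] at hk
    cases b <;> simp [sgn] at hk <;> revert hk <;> decide

open Classical in
lemma sum_nbr (N : ℕ) (v : Fin N → ZMod 4) (g : (Fin N → ZMod 4) → ℂ) :
    (∑ w : Fin N → ZMod 4, if adj N 4 v w then g w else 0)
      = ∑ s : Fin N × Bool, g (v + mov N s) := by
  classical
  rw [← Finset.sum_filter]
  have himg : (univ : Finset (Fin N → ZMod 4)).filter (adj N 4 v)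
      = Finset.image (fun s : Fin N × Bool => v + mov N s) univ := by
    ext w
    simp [adj_iff, eq_comm]
  rw [himg, Finset.sum_image (fun a _ b _ h => mov_injective N v h)]

lemma distO_add_mov (N : ℕ) (v : Fin N → ZMod 4) (s : Fin N × Bool) :
    distO N 4 (v + mov N s) + lev4 (v s.1) = distO N 4 v + lev4 (v s.1 + sgn s.2) := by
  classical
  have key : ∀ u : Fin N → ZMod 4,
      distO N 4 u = lev4 (u s.1) + ∑ k ∈ univ.erase s.1, lev4 (u k) := by
    intro u
    rw [distO]
    simp only [lev_eq_lev4]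
    exact (Finset.add_sum_erase _ _ (mem_univ s.1)).symm
  rw [key (v + mov N s), key v]
  have h1 : (v + mov N s) s.1 = v s.1 + sgn s.2 := by
    rw [add_mov_apply]; simp
  have h2 : ∑ k ∈ univ.erase s.1, lev4 ((v + mov N s) k)
      = ∑ k ∈ univ.erase s.1, lev4 (v k) := by
    refine Finset.sum_congr rfl fun k hk => ?_
    rw [add_mov_apply, if_neg (Finset.ne_of_mem_erase hk)]
  rw [h1, h2]; ring

lemma lev4_step (x : ZMod 4) (b : Bool) :
    lev4 (x + sgn b) = lev4 x + 1 ∨ lev4 x = lev4 (x + sgn b) + 1 := by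
  revert x b; decide

lemma Aplus_eq_s9 (N : ℕ) (f : (Fin N → ZMod 4) → ℂ) (v : Fin N → ZMod 4) :
    Aplus N 4 f v = ∑ s : Fin N × Bool,
      if lev4 (v s.1 + sgn s.2) < lev4 (v s.1) then f (v + mov N s) else 0 := by
  classical
  rw [Aplus]
  rw [show (fun w => if adj N 4 v w ∧ distO N 4 w < distO N 4 v then f w else 0)
      = fun w => if adj N 4 v w then (if distO N 4 w < distO N 4 v then f w else 0) else 0
      from funext fun w => by split_ifs <;> simp_all]
  rw [sum_nbr N v]
  refine Finset.sum_congr rfl fun s _ => ?_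
  have h := distO_add_mov N v s
  by_cases hc : lev4 (v s.1 + sgn s.2) < lev4 (v s.1)
  · rw [if_pos (by omega), if_pos hc]
  · rw [if_neg (by omega), if_neg hc]

lemma Aminus_eq (N : ℕ) (f : (Fin N → ZMod 4) → ℂ) (v : Fin N → ZMod 4) :
    Aminus N 4 f v = ∑ s : Fin N × Bool,
      if lev4 (v s.1) < lev4 (v s.1 + sgn s.2) then f (v + mov N s) else 0 := by
  classical
  rw [Aminus]
  rw [show (fun w => if adj N 4 v w ∧ distO N 4 v < distO N 4 w then f w else 0)
      = fun w => if adj N 4 v w then (if distO N 4 v < distO N 4 w then f w else 0) else 0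
      from funext fun w => by split_ifs <;> simp_all]
  rw [sum_nbr N v]
  refine Finset.sum_congr rfl fun s _ => ?_
  have h := distO_add_mov N v s
  by_cases hc : lev4 (v s.1) < lev4 (v s.1 + sgn s.2)
  · rw [if_pos (by omega), if_pos hc]
  · rw [if_neg (by omega), if_neg hc]


def upP (N : ℕ) (v : Fin N → ZMod 4) (s : Fin N × Bool) : Prop :=
  lev4 (v s.1) < lev4 (v s.1 + sgn s.2)

def dnP (N : ℕ) (v : Fin N → ZMod 4) (s : Fin N × Bool) : Prop :=
  lev4 (v s.1 + sgn s.2) < lev4 (v s.1)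

instance (N v s) : Decidable (upP N v s) := by unfold upP; infer_instance
instance (N v s) : Decidable (dnP N v s) := by unfold dnP; infer_instance

noncomputable def Ee (N : ℕ) (f : (Fin N → ZMod 4) → ℂ) (v : Fin N → ZMod 4)
    (s t : Fin N × Bool) : ℂ :=
  if upP N v s ∧ dnP N (v + mov N s) t then f (v + mov N s + mov N t) else 0

noncomputable def Ee' (N : ℕ) (f : (Fin N → ZMod 4) → ℂ) (v : Fin N → ZMod 4)
    (s t : Fin N × Bool) : ℂ :=
  if dnP N v s ∧ upP N (v + mov N s) t then f (v + mov N s + mov N t) else 0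

lemma AmAp (N : ℕ) (f : (Fin N → ZMod 4) → ℂ) (v : Fin N → ZMod 4) :
    Aminus N 4 (Aplus N 4 f) v = ∑ s : Fin N × Bool, ∑ t : Fin N × Bool, Ee N f v s t := by
  rw [Aminus_eq]
  refine Finset.sum_congr rfl fun s _ => ?_
  by_cases hu : lev4 (v s.1) < lev4 (v s.1 + sgn s.2)
  · rw [if_pos hu, Aplus_eq_s9]
    exact Finset.sum_congr rfl fun t _ => by simp [Ee, upP, hu, dnP]
  · rw [if_neg hu]
    exact (Finset.sum_eq_zero fun t _ => by simp [Ee, upP, hu]).symm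

lemma ApAm (N : ℕ) (f : (Fin N → ZMod 4) → ℂ) (v : Fin N → ZMod 4) :
    Aplus N 4 (Aminus N 4 f) v = ∑ s : Fin N × Bool, ∑ t : Fin N × Bool, Ee' N f v s t := by
  rw [Aplus_eq_s9]
  refine Finset.sum_congr rfl fun s _ => ?_
  by_cases hu : lev4 (v s.1 + sgn s.2) < lev4 (v s.1)
  · rw [if_pos hu, Aminus_eq]
    exact Finset.sum_congr rfl fun t _ => by simp [Ee', dnP, hu, upP]
  · rw [if_neg hu]
    exact (Finset.sum_eq_zero fun t _ => by simp [Ee', dnP, hu]).symm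

lemma cross_eq (N : ℕ) (f : (Fin N → ZMod 4) → ℂ) (v : Fin N → ZMod 4)
    (s t : Fin N × Bool) (h : s.1 ≠ t.1) : Ee N f v s t = Ee' N f v t s := by
  have h1 : (v + mov N s) t.1 = v t.1 := by rw [add_mov_apply, if_neg (Ne.symm h)]
  have h2 : (v + mov N t) s.1 = v s.1 := by rw [add_mov_apply, if_neg h]
  have h3 : v + mov N s + mov N t = v + mov N t + mov N s := by ring
  rw [Ee, Ee', h3]
  exact if_congr (by rw [dnP, dnP, h1, upP, upP, h2, and_comm]) rfl rfl

def mov2 (N : ℕ) (k : Fin N) : Fin N → ZMod 4 := fun j => if j = k then 2 else 0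

lemma mov_same (N : ℕ) (v : Fin N → ZMod 4) (k : Fin N) (b : Bool) :
    v + mov N (k, b) + mov N (k, b) = v + mov2 N k := by
  funext j
  simp only [Pi.add_apply, mov, mov2]
  split
  · cases b <;> simp only [sgn, reduceIte] <;> rw [add_assoc] <;> congr 1 <;> decide
  · simp

lemma mov_TF (N : ℕ) (v : Fin N → ZMod 4) (k : Fin N) :
    v + mov N (k, true) + mov N (k, false) = v := by
  funext j; simp only [Pi.add_apply, mov, sgn]; split <;> simp

lemma mov_FT (N : ℕ) (v : Fin N → ZMod 4) (k : Fin N) :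
    v + mov N (k, false) + mov N (k, true) = v := by
  funext j; simp only [Pi.add_apply, mov, sgn]; split <;> simp

lemma diag_k (N : ℕ) (f : (Fin N → ZMod 4) → ℂ) (v : Fin N → ZMod 4) (k : Fin N) :
    (∑ b : Bool, ∑ b' : Bool, Ee N f v (k, b) (k, b'))
      - (∑ b : Bool, ∑ b' : Bool, Ee' N f v (k, b) (k, b'))
      = (2 - 2 * (lev4 (v k) : ℂ)) * f v := by
  have hk : ∀ b : Bool, (v + mov N (k, b)) k = v k + sgn b := fun b => by
    rw [add_mov_apply]; simp
  simp only [Fintype.sum_bool, Ee, Ee', upP, dnP, hk, mov_same, mov_TF, mov_FT]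
  have h4 : ∀ y : ZMod 4, y = 0 ∨ y = 1 ∨ y = 2 ∨ y = 3 := by decide
  rcases h4 (v k) with h | h | h | h <;> rw [h] <;>
    simp (config := { decide := true }) only [sgn] <;>
    norm_num [show lev4 0 = 0 from rfl, show lev4 1 = 1 from rfl,
      show lev4 2 = 2 from rfl, show lev4 3 = 1 from rfl] <;> ring

lemma comm_eq (N : ℕ) (f : (Fin N → ZMod 4) → ℂ) (v : Fin N → ZMod 4) :
    Aminus N 4 (Aplus N 4 f) v - Aplus N 4 (Aminus N 4 f) v
      = (2 * (N : ℂ) - 2 * (distO N 4 v : ℂ)) * f v := by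
  classical
  rw [AmAp, ApAm, ← Finset.sum_product' (f := fun s t => Ee N f v s t),
    ← Finset.sum_product' (f := fun s t => Ee' N f v s t)]
  rw [← Finset.sum_filter_add_sum_filter_not (univ ×ˢ univ)
      (fun p : (Fin N × Bool) × (Fin N × Bool) => p.1.1 = p.2.1)
      (fun p => Ee N f v p.1 p.2),
    ← Finset.sum_filter_add_sum_filter_not (univ ×ˢ univ)
      (fun p : (Fin N × Bool) × (Fin N × Bool) => p.1.1 = p.2.1)
      (fun p => Ee' N f v p.1 p.2)]
  have hcross : ∑ p ∈ (univ ×ˢ univ).filter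
        (fun p : (Fin N × Bool) × (Fin N × Bool) => ¬ p.1.1 = p.2.1), Ee N f v p.1 p.2
      = ∑ p ∈ (univ ×ˢ univ).filter
        (fun p : (Fin N × Bool) × (Fin N × Bool) => ¬ p.1.1 = p.2.1), Ee' N f v p.1 p.2 := by
    refine Finset.sum_nbij' (fun p => (p.2, p.1)) (fun p => (p.2, p.1)) ?_ ?_ ?_ ?_ ?_
    · intro p hp; simp only [Finset.mem_filter, Finset.mem_product] at *; tauto
    · intro p hp; simp only [Finset.mem_filter, Finset.mem_product] at *; tauto
    · intro p _; rfl
    · intro p _; rfl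
    · intro p hp
      simp only [Finset.mem_filter] at hp
      exact cross_eq N f v p.1 p.2 hp.2
  have hdiag : ∀ g : (Fin N × Bool) → (Fin N × Bool) → ℂ,
      ∑ p ∈ (univ ×ˢ univ).filter
        (fun p : (Fin N × Bool) × (Fin N × Bool) => p.1.1 = p.2.1), g p.1 p.2
      = ∑ k : Fin N, ∑ b : Bool, ∑ b' : Bool, g (k, b) (k, b') := by
    intro g
    have key : ∑ q : Fin N × Bool × Bool, g (q.1, q.2.1) (q.1, q.2.2)
        = ∑ p ∈ (univ ×ˢ univ).filter
          (fun p : (Fin N × Bool) × (Fin N × Bool) => p.1.1 = p.2.1), g p.1 p.2 := by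
      refine Finset.sum_nbij' (fun q => ((q.1, q.2.1), (q.1, q.2.2)))
        (fun p => (p.1.1, p.1.2, p.2.2)) ?_ ?_ ?_ ?_ ?_
      · intro q _
        simp only [Finset.mem_filter, Finset.mem_product]
        exact ⟨⟨Finset.mem_univ _, Finset.mem_univ _⟩, trivial⟩
      · intro p _; exact Finset.mem_univ _
      · intro q _; rfl
      · intro p hp
        simp only [Finset.mem_filter] at hp
        obtain ⟨⟨k, b⟩, ⟨l, b'⟩⟩ := p
        simp only at hp ⊢
        rw [hp.2]
      · intro q _; rfl
    rw [← key, Fintype.sum_prod_type]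
    refine Finset.sum_congr rfl fun k _ => ?_
    rw [Fintype.sum_prod_type]
  rw [hcross, hdiag (fun s t => Ee N f v s t), hdiag (fun s t => Ee' N f v s t)]
  have : (∑ k : Fin N, ∑ b : Bool, ∑ b' : Bool, Ee N f v (k, b) (k, b'))
      - (∑ k : Fin N, ∑ b : Bool, ∑ b' : Bool, Ee' N f v (k, b) (k, b'))
      = ∑ k : Fin N, (2 - 2 * (lev4 (v k) : ℂ)) * f v := by
    rw [← Finset.sum_sub_distrib]
    exact Finset.sum_congr rfl fun k _ => diag_k N f v k
  have hfinal : ∑ k : Fin N, (2 - 2 * (lev4 (v k) : ℂ)) * f v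
      = (2 * (N : ℂ) - 2 * (distO N 4 v : ℂ)) * f v := by
    rw [← Finset.sum_mul]
    congr 1
    rw [Finset.sum_sub_distrib, Finset.sum_const, Finset.card_univ, Fintype.card_fin]
    rw [distO]
    push_cast [lev_eq_lev4]
    rw [← Finset.mul_sum]
    ring
  linear_combination this + hfinal

lemma distO_eq_card (N : ℕ) (v : Fin N → ZMod 4) :
    distO N 4 v = cardLev N 4 v 1 + 2 * cardLev N 4 v 2 := by
  classical
  have hpt : ∀ x : ZMod 4, lev4 x
      = (if lev4 x = 1 then 1 else 0) + 2 * (if lev4 x = 2 then 1 else 0) := by decide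
  rw [distO]
  simp only [lev_eq_lev4]
  rw [Finset.sum_congr rfl fun k _ => hpt (v k), Finset.sum_add_distrib, ← Finset.mul_sum]
  congr 1
  · rw [cardLev, Finset.card_filter]
    exact Finset.sum_congr rfl fun k _ => rfl
  · rw [cardLev, Finset.card_filter]
    simp only [lev_eq_lev4]
    congr 1 <;> exact Finset.sum_congr rfl fun k _ => rfl

lemma supp_step (N d : ℕ) (f : (Fin N → ZMod 4) → ℂ)
    (hf : ∀ v, distO N 4 v ≠ d → f v = 0) :
    ∀ v, distO N 4 v ≠ d + 1 → Aplus N 4 f v = 0 := by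
  intro v hv
  rw [Aplus_eq_s9]
  refine Finset.sum_eq_zero fun s _ => ?_
  by_cases hc : lev4 (v s.1 + sgn s.2) < lev4 (v s.1)
  · rw [if_pos hc]
    refine hf _ ?_
    have hd := distO_add_mov N v s
    have hstep := lev4_step (v s.1) s.2
    omega
  · rw [if_neg hc]

lemma Aplus_smul (N : ℕ) (c : ℂ) (h : (Fin N → ZMod 4) → ℂ) (v : Fin N → ZMod 4) :
    Aplus N 4 (c • h) v = c * Aplus N 4 h v := by
  rw [Aplus_eq_s9, Aplus_eq_s9, Finset.mul_sum]
  exact Finset.sum_congr rfl fun s _ => by split_ifs <;> simp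

lemma Aplus_zero (N : ℕ) (v : Fin N → ZMod 4) : Aplus N 4 (0 : (Fin N → ZMod 4) → ℂ) v = 0 := by
  rw [Aplus_eq_s9]
  exact Finset.sum_eq_zero fun s _ => by split_ifs <;> rfl


end Aux

/-- on `C_4^N`, if `f` is supported in `Σ_{p,q}` and `A₋ f = 0`, then
`A₋ A₊^{k+1} f = m(r,k) • A₊^k f`, where `r = p + 2q`. -/
theorem lowering_identity_C4 (N p q : ℕ) (hN : 1 ≤ N)
    (f : (Fin N → ZMod 4) → ℂ)
    (hf : ∀ v, ¬(cardLev N 4 v 1 = p ∧ cardLev N 4 v 2 = q) → f v = 0)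
    (hker : Aminus N 4 f = 0) :
    ∀ k : ℕ, Aminus N 4 ((Aplus N 4)^[k + 1] f)
      = ((mc4 N (p + 2 * q) k : ℂ)) • (Aplus N 4)^[k] f := by
  set r := p + 2 * q with hr
  have hsupp : ∀ k : ℕ, ∀ v, distO N 4 v ≠ r + k → (Aplus N 4)^[k] f v = 0 := by
    intro k
    induction k with
    | zero =>
      intro v hv
      refine hf v ?_
      rintro ⟨h1, h2⟩
      exact hv (by rw [distO_eq_card, h1, h2]; omega)
    | succ n ih =>
      intro v hv
      rw [Function.iterate_succ_apply']
      exact supp_step N (r + n) _ ih v (by omega)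
  intro k
  induction k with
  | zero =>
    funext v
    have hc := comm_eq N f v
    have h0 : Aplus N 4 (Aminus N 4 f) v = 0 := by rw [hker]; exact Aplus_zero N v
    rw [h0] at hc
    simp only [Nat.zero_add, Function.iterate_one, Function.iterate_zero, id_eq,
      Pi.smul_apply, smul_eq_mul]
    by_cases hfv : f v = 0
    · rw [hfv, mul_zero]
      linear_combination hc + (2 * (N : ℂ) - 2 * (distO N 4 v : ℂ)) * hfv
    · have hd : distO N 4 v = r := by
        by_contra hd
        exact hfv (hsupp 0 v (by omega))
      have hcast : ((mc4 N r 0 : ℤ) : ℂ) = 2 * (N : ℂ) - 2 * (r : ℂ) := by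
        show ((2 * ((N : ℤ) - (r : ℤ)) : ℤ) : ℂ) = _
        push_cast; ring
      rw [hd] at hc
      rw [hcast]
      linear_combination hc
  | succ n ih =>
    funext v
    have hc := comm_eq N ((Aplus N 4)^[n + 1] f) v
    have h1 : Aplus N 4 (Aminus N 4 ((Aplus N 4)^[n + 1] f)) v
        = (mc4 N r n : ℂ) * (Aplus N 4)^[n + 1] f v := by
      rw [ih, Aplus_smul,
        show Aplus N 4 ((Aplus N 4)^[n] f) v = (Aplus N 4)^[n + 1] f v from
          congrFun (Function.iterate_succ_apply' (Aplus N 4) n f).symm v]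
    rw [h1] at hc
    rw [show (Aplus N 4)^[n + 1 + 1] f = Aplus N 4 ((Aplus N 4)^[n + 1] f) from
      Function.iterate_succ_apply' (Aplus N 4) (n + 1) f]
    simp only [Pi.smul_apply, smul_eq_mul]
    by_cases hg : (Aplus N 4)^[n + 1] f v = 0
    · rw [hg, mul_zero]
      linear_combination hc
        + ((mc4 N r n : ℂ) + 2 * (N : ℂ) - 2 * (distO N 4 v : ℂ)) * hg
    · have hd : distO N 4 v = r + (n + 1) := by
        by_contra hd
        exact hg (hsupp (n + 1) v hd)
      have hcast : ((mc4 N r (n + 1) : ℤ) : ℂ)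
          = (mc4 N r n : ℂ) + 2 * (N : ℂ) - 2 * ((r : ℂ) + (n : ℂ) + 1) := by
        show ((mc4 N r n + 2 * ((N : ℤ) - ((r : ℤ) + ((n : ℤ) + 1))) : ℤ) : ℂ) = _
        push_cast; ring
      rw [hd] at hc
      push_cast at hc
      rw [hcast]
      linear_combination hc
end
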